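/- arXiv:1706.06126 — 2 statements merged into one kernel-verified Lean document; each statement's English description precedes it below -/
import Mathlib

section
/- Let f be a twice continuously differentiable nonvanishing solution of f'' = q f on (-b,b) with f(0)=1. Then each even-indexed formal power φ_{2m}(x) = f(x) X̃^(2m)(x) is twice continuously differentiable and satisfies φ_{2m}'' - q φ_{2m} = 2m(2m-1) φ_{2m-2} on (-b,b). -/
noncomputable def Xseq (f : ℝ → ℂ) : ℕ → ℝ → ℂ
  | 0 => fun _ => 1
  | n + 1 => fun x => ((n : ℂ) + 1) *
      ∫ s in (0 : ℝ)..x, Xseq f n s * (if (n + 1) % 2 = 0 then (f s) ^ 2 else ((f s) ^ 2)⁻¹)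

noncomputable def Xtseq (f : ℝ → ℂ) : ℕ → ℝ → ℂ
  | 0 => fun _ => 1
  | n + 1 => fun x => ((n : ℂ) + 1) *
      ∫ s in (0 : ℝ)..x, Xtseq f n s * (if (n + 1) % 2 = 0 then ((f s) ^ 2)⁻¹ else (f s) ^ 2)

noncomputable def formalPower (f : ℝ → ℂ) (k : ℕ) (x : ℝ) : ℂ :=
  if k % 2 = 1 then f x * Xseq f k x else f x * Xtseq f k x

open Topology Filter in
private lemma prim_hasDerivAt {U : Set ℝ} (hU : IsOpen U) (hUc : U.OrdConnected)
    (h0 : (0:ℝ) ∈ U) {g : ℝ → ℂ} (hg : ContinuousOn g U) {x : ℝ} (hx : x ∈ U) :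
    HasDerivAt (fun y => ∫ s in (0:ℝ)..y, g s) (g x) x := by
  apply intervalIntegral.integral_hasDerivAt_right
  · exact (hg.mono (hUc.uIcc_subset h0 hx)).intervalIntegrable
  · exact hg.stronglyMeasurableAtFilter hU x hx
  · exact hg.continuousAt (hU.mem_nhds hx)

open Topology Filter in
theorem formalPower_even_ode (b : ℝ) (hb : 0 < b) (q f : ℝ → ℂ)
    (hq : ContinuousOn q (Set.Ioo (-b) b))
    (hf : ContDiffOn ℝ 2 f (Set.Ioo (-b) b))
    (hf0 : f 0 = 1)
    (hfnv : ∀ x ∈ Set.Ioo (-b) b, f x ≠ 0)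
    (hfeq : ∀ x ∈ Set.Ioo (-b) b, deriv (deriv f) x = q x * f x)
    (m : ℕ) (hm : 1 ≤ m) :
    ContDiffOn ℝ 2 (fun x => formalPower f (2 * m) x) (Set.Ioo (-b) b) ∧
    ∀ x ∈ Set.Ioo (-b) b,
      deriv (deriv (fun y => formalPower f (2 * m) y)) x - q x * formalPower f (2 * m) x
        = (2 * m : ℂ) * (2 * m - 1 : ℂ) * formalPower f (2 * m - 2) x := by
  set U : Set ℝ := Set.Ioo (-b) b with hUdef
  have hU : IsOpen U := isOpen_Ioo
  have hUc : U.OrdConnected := Set.ordConnected_Ioo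
  have h0 : (0:ℝ) ∈ U := ⟨by linarith, hb⟩
  have hfc : ContinuousOn f U := hf.continuousOn
  have hsq : ContinuousOn (fun s => (f s) ^ 2) U := hfc.pow 2
  have hinv : ContinuousOn (fun s => ((f s) ^ 2)⁻¹) U :=
    hsq.inv₀ (fun x hx => pow_ne_zero 2 (hfnv x hx))
  -- continuity of all Xtseq
  have contXt : ∀ n, ContinuousOn (Xtseq f n) U := by
    intro n
    induction n with
    | zero => exact continuousOn_const
    | succ n ih =>
      have hw : ContinuousOn
          (fun s => Xtseq f n s * (if (n + 1) % 2 = 0 then ((f s) ^ 2)⁻¹ else (f s) ^ 2)) U := by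
        by_cases h : (n + 1) % 2 = 0
        · simpa [h, Pi.mul_def] using ih.mul hinv
        · simpa [h, Pi.mul_def] using ih.mul hsq
      intro x hx
      exact (((prim_hasDerivAt hU hUc h0 hw hx).const_mul ((n:ℂ)+1)).continuousAt).continuousWithinAt
  have derivXt : ∀ n, ∀ x ∈ U, HasDerivAt (Xtseq f (n+1))
      (((n:ℂ)+1) * (Xtseq f n x * (if (n + 1) % 2 = 0 then ((f x) ^ 2)⁻¹ else (f x) ^ 2))) x := by
    intro n x hx
    have hw : ContinuousOn
        (fun s => Xtseq f n s * (if (n + 1) % 2 = 0 then ((f s) ^ 2)⁻¹ else (f s) ^ 2)) U := by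
      by_cases h : (n + 1) % 2 = 0
      · simpa [h, Pi.mul_def] using (contXt n).mul hinv
      · simpa [h, Pi.mul_def] using (contXt n).mul hsq
    exact (prim_hasDerivAt hU hUc h0 hw hx).const_mul ((n:ℂ)+1)
  obtain ⟨j, rfl⟩ : ∃ j, m = j + 1 := ⟨m - 1, by omega⟩
  have h2m : 2 * (j + 1) = (2 * j + 1) + 1 := by ring
  have h2m2 : 2 * (j + 1) - 2 = 2 * j := by omega
  set A : ℝ → ℂ := Xtseq f (2 * j + 2) with hA
  set B : ℝ → ℂ := Xtseq f (2 * j + 1) with hB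
  set C : ℝ → ℂ := Xtseq f (2 * j) with hC
  have hdA : ∀ x ∈ U, HasDerivAt A ((2 * (j:ℂ) + 2) * (B x * ((f x) ^ 2)⁻¹)) x := by
    intro x hx
    have := derivXt (2 * j + 1) x hx
    simp only [if_pos (by omega : (2 * j + 1 + 1) % 2 = 0)] at this
    have h2 : ((2 * j + 1 : ℕ) : ℂ) + 1 = 2 * (j:ℂ) + 2 := by push_cast; ring
    rw [h2] at this
    exact this
  have hdB : ∀ x ∈ U, HasDerivAt B ((2 * (j:ℂ) + 1) * (C x * (f x) ^ 2)) x := by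
    intro x hx
    have := derivXt (2 * j) x hx
    simp only [if_neg (by omega : ¬ (2 * j + 1) % 2 = 0)] at this
    have h2 : ((2 * j : ℕ) : ℂ) + 1 = 2 * (j:ℂ) + 1 := by push_cast; ring
    rw [h2] at this
    exact this
  -- derivative facts for f
  have hdf1 : ContDiffOn ℝ 1 (deriv f) U := by
    exact ContDiffOn.deriv_of_isOpen (m := 1) hf hU (by norm_num)
  have hfd : ∀ x ∈ U, HasDerivAt f (deriv f x) x := fun x hx =>
    ((hf.differentiableOn (by norm_num)).differentiableAt (hU.mem_nhds hx)).hasDerivAt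
  have hfd2 : ∀ x ∈ U, HasDerivAt (deriv f) (q x * f x) x := by
    intro x hx
    have h := ((hdf1.differentiableOn (by norm_num)).differentiableAt (hU.mem_nhds hx)).hasDerivAt
    rwa [hfeq x hx] at h
  -- φ and φ₁
  set φ : ℝ → ℂ := fun x => f x * A x with hφ
  set φ₁ : ℝ → ℂ := fun x => deriv f x * A x + (2 * (j:ℂ) + 2) * B x * (f x)⁻¹ with hφ₁
  have hdφ : ∀ x ∈ U, HasDerivAt φ (φ₁ x) x := by
    intro x hx
    have h := (hfd x hx).mul (hdA x hx)
    refine h.congr_deriv ?_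
    have hfx := hfnv x hx
    simp only [hφ₁, pow_two, mul_inv]
    field_simp
  set ψ : ℝ → ℂ := fun x => q x * f x * A x + (2 * (j:ℂ) + 2) * (2 * (j:ℂ) + 1) * f x * C x
    with hψ
  have hdφ₁ : ∀ x ∈ U, HasDerivAt φ₁ (ψ x) x := by
    intro x hx
    have hfx := hfnv x hx
    have h1 := (hfd2 x hx).mul (hdA x hx)
    have h2 := ((hdB x hx).const_mul (2 * (j:ℂ) + 2)).div (hfd x hx) hfx
    simp only [div_eq_mul_inv] at h2
    have h := h1.add h2
    refine h.congr_deriv ?_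
    simp only [hψ, pow_two, mul_inv]
    field_simp
    ring
  have hψc : ContinuousOn ψ U := by
    apply ContinuousOn.add
    · exact ((hq.mul hfc).mul (contXt (2 * j + 2)))
    · exact (continuousOn_const.mul hfc).mul (contXt (2 * j))
  have hEq : Set.EqOn (fun x => formalPower f (2 * (j + 1)) x) φ U := by
    intro x hx
    simp only [formalPower, hφ]
    rw [if_neg (by omega : ¬ (2 * (j + 1)) % 2 = 1)]
    norm_num [hA, show 2 * (j + 1) = 2 * j + 2 by ring]
  have hEqderiv : Set.EqOn (deriv φ) φ₁ U := fun x hx => (hdφ x hx).deriv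
  have hEqderiv1 : Set.EqOn (deriv φ₁) ψ U := fun x hx => (hdφ₁ x hx).deriv
  have hcd : ContDiffOn ℝ 2 φ U := by
    rw [show (2 : WithTop ℕ∞) = 1 + 1 by norm_num, contDiffOn_succ_iff_deriv_of_isOpen hU]
    refine ⟨fun x hx => (hdφ x hx).differentiableAt.differentiableWithinAt, by simp, ?_⟩
    apply ContDiffOn.congr _ (fun x hx => (hEqderiv hx))
    rw [show (1 : WithTop ℕ∞) = 0 + 1 by norm_num, contDiffOn_succ_iff_deriv_of_isOpen hU]
    refine ⟨fun x hx => (hdφ₁ x hx).differentiableAt.differentiableWithinAt, by simp, ?_⟩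
    rw [contDiffOn_zero]
    exact hψc.congr hEqderiv1
  constructor
  · exact hcd.congr hEq
  · intro x hx
    have e1 : deriv (deriv (fun y => formalPower f (2 * (j + 1)) y)) x = deriv (deriv φ) x := by
      apply Filter.EventuallyEq.deriv_eq
      have : ∀ᶠ y in 𝓝 x, y ∈ U := hU.eventually_mem hx
      filter_upwards [this] with y hy
      apply Filter.EventuallyEq.deriv_eq
      filter_upwards [hU.eventually_mem hy] with z hz
      exact hEq hz
    have e2 : deriv (deriv φ) x = deriv φ₁ x := by
      apply Filter.EventuallyEq.deriv_eq
      filter_upwards [hU.eventually_mem hx] with y hy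
      exact hEqderiv hy
    have e3 : deriv φ₁ x = ψ x := (hdφ₁ x hx).deriv
    have hEq' : formalPower f (2 * (j + 1)) x = φ x := hEq hx
    rw [e1, e2, e3, hEq']
    have e4 : formalPower f (2 * (j + 1) - 2) x = f x * C x := by
      simp only [formalPower, h2m2, hC]
      rw [if_neg (by omega : ¬ (2 * j) % 2 = 1)]
    rw [e4]
    simp only [hψ, hφ]
    push_cast
    ring
end

section
/- Under the same setup, each odd-indexed formal power φ_{2m+1}(x) = f(x) X^(2m+1)(x) satisfies φ_{2m+1}'' - q φ_{2m+1} = (2m+1)(2m) φ_{2m-1} on (-b,b), and φ_1'' - q φ_1 = 0. -/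
section Helpers
open Set MeasureTheory intervalIntegral

lemma ftc {b : ℝ} (hb : 0 < b) {g : ℝ → ℂ} (hg : ContinuousOn g (Ioo (-b) b))
    {x : ℝ} (hx : x ∈ Ioo (-b) b) :
    HasDerivAt (fun t => ∫ s in (0:ℝ)..t, g s) (g x) x := by
  have h0 : (0:ℝ) ∈ Ioo (-b) b := by constructor <;> linarith [hx.1, hx.2]
  have hsub : uIcc (0:ℝ) x ⊆ Ioo (-b) b := Set.ordConnected_Ioo.uIcc_subset h0 hx
  exact intervalIntegral.integral_hasDerivAt_right
    ((hg.mono hsub).intervalIntegrable)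
    (hg.stronglyMeasurableAtFilter isOpen_Ioo x hx)
    (hg.continuousAt (isOpen_Ioo.mem_nhds hx))

variable {b : ℝ} {f : ℝ → ℂ}

lemma branch_cont (hfc : ContinuousOn f (Ioo (-b) b))
    (hfnv : ∀ x ∈ Ioo (-b) b, f x ≠ 0) (n : ℕ) :
    ContinuousOn (fun s => if (n + 1) % 2 = 0 then (f s) ^ 2 else ((f s) ^ 2)⁻¹)
      (Ioo (-b) b) := by
  split_ifs
  · exact hfc.pow 2
  · exact (hfc.pow 2).inv₀ fun x hx => pow_ne_zero 2 (hfnv x hx)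

lemma Xseq_cont (hb : 0 < b) (hfc : ContinuousOn f (Ioo (-b) b))
    (hfnv : ∀ x ∈ Ioo (-b) b, f x ≠ 0) :
    ∀ n, ContinuousOn (Xseq f n) (Ioo (-b) b) := by
  intro n
  induction n with
  | zero => exact continuousOn_const
  | succ n ih =>
    intro x hx
    have hint : ContinuousOn
        (fun s => Xseq f n s * (if (n + 1) % 2 = 0 then (f s) ^ 2 else ((f s) ^ 2)⁻¹))
        (Ioo (-b) b) := ih.mul (branch_cont hfc hfnv n)
    exact (continuousAt_const.mul (ftc hb hint hx).continuousAt).continuousWithinAt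

lemma Xseq_deriv (hb : 0 < b) (hfc : ContinuousOn f (Ioo (-b) b))
    (hfnv : ∀ x ∈ Ioo (-b) b, f x ≠ 0) (n : ℕ) {x : ℝ} (hx : x ∈ Ioo (-b) b) :
    HasDerivAt (Xseq f (n + 1))
      (((n : ℂ) + 1) * (Xseq f n x * (if (n + 1) % 2 = 0 then (f x) ^ 2 else ((f x) ^ 2)⁻¹))) x := by
  have hint : ContinuousOn
      (fun s => Xseq f n s * (if (n + 1) % 2 = 0 then (f s) ^ 2 else ((f s) ^ 2)⁻¹))
      (Ioo (-b) b) := (Xseq_cont hb hfc hfnv n).mul (branch_cont hfc hfnv n)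
  exact (ftc hb hint hx).const_mul _

-- core lemma for m ≥ 1
lemma main_odd (hb : 0 < b) (q : ℝ → ℂ)
    (hf : ContDiffOn ℝ 2 f (Ioo (-b) b))
    (hfnv : ∀ x ∈ Ioo (-b) b, f x ≠ 0)
    (hfeq : ∀ x ∈ Ioo (-b) b, deriv (deriv f) x = q x * f x)
    (m : ℕ) (hm : 1 ≤ m) {x : ℝ} (hx : x ∈ Ioo (-b) b) :
    deriv (deriv (fun y => f y * Xseq f (2 * m + 1) y)) x
        - q x * (f x * Xseq f (2 * m + 1) x)
      = (2 * m + 1 : ℂ) * (2 * m : ℂ) * (f x * Xseq f (2 * m - 1) x) := by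
  obtain ⟨k, rfl⟩ : ∃ k, m = k + 1 := ⟨m - 1, by omega⟩
  set I := Ioo (-b) b with hI
  have hfc : ContinuousOn f I := hf.continuousOn
  have hdf : ∀ y ∈ I, HasDerivAt f (deriv f y) y := fun y hy =>
    ((hf.differentiableOn (by simp)).differentiableAt (isOpen_Ioo.mem_nhds hy)).hasDerivAt
  have hdf1 : ContDiffOn ℝ 1 (deriv f) I := hf.deriv_of_isOpen isOpen_Ioo (by norm_num)
  have hdf2 : HasDerivAt (deriv f) (q x * f x) x := by
    have := ((hdf1.differentiableOn (by simp)).differentiableAt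
      (isOpen_Ioo.mem_nhds hx)).hasDerivAt
    rwa [hfeq x hx] at this
  -- derivative of X_{2m+1}
  have hX' : ∀ y ∈ I, HasDerivAt (Xseq f (2 * (k + 1) + 1))
      ((2 * (k:ℂ) + 2 + 1) * (Xseq f (2 * (k + 1)) y * ((f y) ^ 2)⁻¹)) y := by
    intro y hy
    have h := Xseq_deriv hb hfc hfnv (2 * (k + 1)) hy
    have h2 : (2 * (k + 1) + 1) % 2 = 1 := by omega
    rw [h2] at h
    simp only [Nat.cast_mul, Nat.cast_add, Nat.cast_ofNat, Nat.cast_one] at h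
    convert h using 2 <;> push_cast <;> ring
  -- derivative of X_{2m}
  have hY' : HasDerivAt (Xseq f (2 * (k + 1)))
      ((2 * (k:ℂ) + 2) * (Xseq f (2 * k + 1) x * (f x) ^ 2)) x := by
    have h := Xseq_deriv hb hfc hfnv (2 * k + 1) hx
    have h2 : (2 * k + 1 + 1) % 2 = 0 := by omega
    rw [h2] at h
    have h3 : 2 * k + 1 + 1 = 2 * (k + 1) := by ring
    rw [h3] at h
    simp only [if_pos rfl] at h
    convert h using 2 <;> push_cast <;> ring
  set G : ℝ → ℂ := fun y =>
    deriv f y * Xseq f (2 * (k + 1) + 1) y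
      + (2 * (k:ℂ) + 2 + 1) * (Xseq f (2 * (k + 1)) y * (f y)⁻¹) with hG
  have hDφ : ∀ y ∈ I, HasDerivAt (fun t => f t * Xseq f (2 * (k + 1) + 1) t) (G y) y := by
    intro y hy
    have h := (hdf y hy).fun_mul (hX' y hy)
    refine h.congr_deriv ?_
    have hf0 := hfnv y hy
    simp only [hG]
    rw [sq, mul_inv]
    field_simp
  have hGx : HasDerivAt G
      ((q x * f x) * Xseq f (2 * (k + 1) + 1) x
        + deriv f x * ((2 * (k:ℂ) + 2 + 1) * (Xseq f (2 * (k + 1)) x * ((f x) ^ 2)⁻¹))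
        + (2 * (k:ℂ) + 2 + 1) *
            ((2 * (k:ℂ) + 2) * (Xseq f (2 * k + 1) x * (f x) ^ 2) * (f x)⁻¹
              + Xseq f (2 * (k + 1)) x * (-(deriv f x) / (f x) ^ 2))) x := by
    have hinv : HasDerivAt (fun y => (f y)⁻¹) (-(deriv f x) / (f x) ^ 2) x := by
      have := (hasDerivAt_const x (1:ℂ)).fun_div (hdf x hx) (hfnv x hx)
      simp only [one_div] at this
      refine this.congr_deriv ?_
      ring
    exact (hdf2.mul (hX' x hx)).add (((hY'.mul hinv)).const_mul _)
  have hEvEq : deriv (fun y => f y * Xseq f (2 * (k + 1) + 1) y) =ᶠ[nhds x] G :=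
    Filter.eventuallyEq_of_mem (isOpen_Ioo.mem_nhds hx) fun y hy => (hDφ y hy).deriv
  rw [hEvEq.deriv_eq, hGx.deriv]
  have h4 : 2 * (k + 1) - 1 = 2 * k + 1 := by omega
  rw [h4]
  have hf0 := hfnv x hx
  push_cast
  field_simp
  ring

-- core lemma for φ₁
lemma main_one (hb : 0 < b) (q : ℝ → ℂ)
    (hf : ContDiffOn ℝ 2 f (Ioo (-b) b))
    (hfnv : ∀ x ∈ Ioo (-b) b, f x ≠ 0)
    (hfeq : ∀ x ∈ Ioo (-b) b, deriv (deriv f) x = q x * f x)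
    {x : ℝ} (hx : x ∈ Ioo (-b) b) :
    deriv (deriv (fun y => f y * Xseq f 1 y)) x - q x * (f x * Xseq f 1 x) = 0 := by
  set I := Ioo (-b) b with hI
  have hfc : ContinuousOn f I := hf.continuousOn
  have hdf : ∀ y ∈ I, HasDerivAt f (deriv f y) y := fun y hy =>
    ((hf.differentiableOn (by simp)).differentiableAt (isOpen_Ioo.mem_nhds hy)).hasDerivAt
  have hdf1 : ContDiffOn ℝ 1 (deriv f) I := hf.deriv_of_isOpen isOpen_Ioo (by norm_num)
  have hdf2 : HasDerivAt (deriv f) (q x * f x) x := by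
    have := ((hdf1.differentiableOn (by simp)).differentiableAt
      (isOpen_Ioo.mem_nhds hx)).hasDerivAt
    rwa [hfeq x hx] at this
  have hX' : ∀ y ∈ I, HasDerivAt (Xseq f 1) (((f y) ^ 2)⁻¹) y := by
    intro y hy
    have h := Xseq_deriv hb hfc hfnv 0 hy
    simpa [Xseq] using h
  set G : ℝ → ℂ := fun y => deriv f y * Xseq f 1 y + (f y)⁻¹ with hG
  have hDφ : ∀ y ∈ I, HasDerivAt (fun t => f t * Xseq f 1 t) (G y) y := by
    intro y hy
    have h := (hdf y hy).fun_mul (hX' y hy)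
    refine h.congr_deriv ?_
    have hf0 := hfnv y hy
    simp only [hG]
    rw [sq, mul_inv]
    field_simp
  have hGx : HasDerivAt G
      ((q x * f x) * Xseq f 1 x + deriv f x * ((f x) ^ 2)⁻¹
        + (-(deriv f x) / (f x) ^ 2)) x := by
    have hinv : HasDerivAt (fun y => (f y)⁻¹) (-(deriv f x) / (f x) ^ 2) x := by
      have := (hasDerivAt_const x (1:ℂ)).fun_div (hdf x hx) (hfnv x hx)
      simp only [one_div] at this
      refine this.congr_deriv ?_
      ring
    exact (hdf2.mul (hX' x hx)).add hinv
  have hEvEq : deriv (fun y => f y * Xseq f 1 y) =ᶠ[nhds x] G :=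
    Filter.eventuallyEq_of_mem (isOpen_Ioo.mem_nhds hx) fun y hy => (hDφ y hy).deriv
  rw [hEvEq.deriv_eq, hGx.deriv]
  have hf0 := hfnv x hx
  field_simp
  ring

end Helpers

theorem formalPower_odd_ode (b : ℝ) (hb : 0 < b) (q f : ℝ → ℂ)
    (hq : ContinuousOn q (Set.Ioo (-b) b))
    (hf : ContDiffOn ℝ 2 f (Set.Ioo (-b) b))
    (hf0 : f 0 = 1)
    (hfnv : ∀ x ∈ Set.Ioo (-b) b, f x ≠ 0)
    (hfeq : ∀ x ∈ Set.Ioo (-b) b, deriv (deriv f) x = q x * f x) :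
    (∀ m : ℕ, 1 ≤ m → ∀ x ∈ Set.Ioo (-b) b,
      deriv (deriv (fun y => formalPower f (2 * m + 1) y)) x
          - q x * formalPower f (2 * m + 1) x
        = (2 * m + 1 : ℂ) * (2 * m : ℂ) * formalPower f (2 * m - 1) x) ∧
    (∀ x ∈ Set.Ioo (-b) b,
      deriv (deriv (fun y => formalPower f 1 y)) x - q x * formalPower f 1 x = 0) := by
  constructor
  · intro m hm x hx
    have h1 : (2 * m + 1) % 2 = 1 := by omega
    have h2 : (2 * m - 1) % 2 = 1 := by omega
    have e1 : (fun y => formalPower f (2 * m + 1) y)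
        = fun y => f y * Xseq f (2 * m + 1) y := by
      funext y; simp [formalPower, h1]
    have e1' : formalPower f (2 * m + 1) x = f x * Xseq f (2 * m + 1) x := by
      simp [formalPower, h1]
    have e2 : formalPower f (2 * m - 1) x = f x * Xseq f (2 * m - 1) x := by
      simp [formalPower, h2]
    rw [e1, e1', e2]
    exact main_odd hb q hf hfnv hfeq m hm hx
  · intro x hx
    have e1 : (fun y => formalPower f 1 y) = fun y => f y * Xseq f 1 y := by
      funext y; simp [formalPower]
    have e1' : formalPower f 1 x = f x * Xseq f 1 x := by simp [formalPower]
    rw [e1, e1']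
    exact main_one hb q hf hfnv hfeq hx
end
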